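/- arXiv:1711.10876 — 3 statements merged into one kernel-verified Lean document; each statement's English description precedes it below -/
import Mathlib

section
/- Let q be an odd prime power and S a set of q+2 points of PG(2,q). Let S_0 be the set of points x of S such that every one of the q+1 lines through x is a bi-secant of S. Then |S_0| ≤ 2. -/
open Projectivization

abbrev Pt (F : Type) [Field F] : Type := Projectivization F (Fin 3 → F)

def IsLine (F : Type) [Field F] (W : Submodule F (Fin 3 → F)) : Prop :=
  Module.finrank F W = 2

noncomputable def secantCount (F : Type) [Field F] (S : Set (Pt F))
    (W : Submodule F (Fin 3 → F)) : ℕ :=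
  {p ∈ S | p.submodule ≤ W}.ncard

noncomputable def oddSecants (F : Type) [Field F] (S : Set (Pt F)) : ℕ :=
  {W : Submodule F (Fin 3 → F) | IsLine F W ∧ Odd (secantCount F S W)}.ncard

noncomputable def linesThroughWithCount (F : Type) [Field F] (S : Set (Pt F))
    (x : Pt F) (i : ℕ) : ℕ :=
  {W : Submodule F (Fin 3 → F) | IsLine F W ∧ x.submodule ≤ W ∧ secantCount F S W = i}.ncard

noncomputable def S43 (F : Type) [Field F] [Fintype F] (S : Set (Pt F)) : Set (Pt F) :=
  {x ∈ S | linesThroughWithCount F S x 1 = 1 ∧ linesThroughWithCount F S x 3 = 1 ∧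
    linesThroughWithCount F S x 2 = Fintype.card F - 1}

section Aux

variable {F : Type} [Field F]

lemma fin3_cases {i j k m : Fin 3} (hij : i ≠ j) (hik : i ≠ k) (hjk : j ≠ k)
    (hmi : m ≠ i) : m = j ∨ m = k := by
  have h1 := i.isLt; have h2 := j.isLt; have h3 := k.isLt; have h4 := m.isLt
  simp only [Ne, Fin.ext_iff] at hij hik hjk hmi ⊢
  omega

lemma pair_indep {p q : Pt F} (h : p ≠ q) : LinearIndependent F ![p.rep, q.rep] := by
  have h1 := (Projectivization.independent_pair_iff_ne p q).2 h
  rw [Projectivization.independent_iff] at h1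
  have h2 : (Projectivization.rep ∘ ![p, q]) = ![p.rep, q.rep] := by
    funext i; fin_cases i <;> rfl
  rwa [h2] at h1

lemma line2 {p q : Pt F} (h : p ≠ q) :
    IsLine F (Submodule.span F (Set.range ![p.rep, q.rep])) := by
  have h1 : LinearIndependent F ![p.rep, q.rep] := pair_indep h
  have h2 := finrank_span_eq_card h1
  rw [Fintype.card_fin] at h2
  unfold IsLine
  exact h2

lemma submodule_le_of_rep_mem {p : Pt F} {W : Submodule F (Fin 3 → F)}
    (h : p.rep ∈ W) : p.submodule ≤ W := by
  rw [Projectivization.submodule_eq]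
  exact Submodule.span_le.2 (by simpa using h)

lemma rep_mem_line_left (p q : Pt F) :
    p.rep ∈ Submodule.span F (Set.range ![p.rep, q.rep]) :=
  Submodule.subset_span ⟨0, rfl⟩

lemma rep_mem_line_right (p q : Pt F) :
    q.rep ∈ Submodule.span F (Set.range ![p.rep, q.rep]) :=
  Submodule.subset_span ⟨1, rfl⟩

lemma no3 (S : Set (Pt F)) (hSfin : S.Finite) {x p q : Pt F}
    (hx2 : ∀ W, IsLine F W → x.submodule ≤ W → secantCount F S W = 2)
    (hxS : x ∈ S) (hpS : p ∈ S) (hqS : q ∈ S)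
    (hxp : x ≠ p) (hxq : x ≠ q) (hpq : p ≠ q)
    {W : Submodule F (Fin 3 → F)} (hW : IsLine F W)
    (hxW : x.submodule ≤ W) (hpW : p.submodule ≤ W) (hqW : q.submodule ≤ W) : False := by
  have h2 := hx2 W hW hxW
  have hsub : ({x, p, q} : Set (Pt F)) ⊆ {r ∈ S | r.submodule ≤ W} := by
    rintro r (rfl | rfl | rfl) <;> exact ⟨‹_›, ‹_›⟩
  have hfin : {r ∈ S | r.submodule ≤ W}.Finite := hSfin.subset (fun r hr => hr.1)
  have h3 : ({x, p, q} : Set (Pt F)).ncard = 3 := by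
    rw [Set.ncard_insert_of_notMem (by simp [hxp, hxq]) (Set.toFinite _),
      Set.ncard_pair hpq]
  have hle := Set.ncard_le_ncard hsub hfin
  unfold secantCount at h2
  rw [h3] at hle
  omega

lemma coord_zero_aux (S : Set (Pt F)) (hSfin : S.Finite) (B : Module.Basis (Fin 3) F (Fin 3 → F))
    (i j k : Fin 3) (hij : i ≠ j) (hik : i ≠ k) (hjk : j ≠ k)
    {pj pk : Pt F} (hj : B j = pj.rep) (hk : B k = pk.rep)
    (hpj2 : ∀ W, IsLine F W → pj.submodule ≤ W → secantCount F S W = 2)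
    (hpjS : pj ∈ S) (hpkS : pk ∈ S) (hpjk : pj ≠ pk)
    {s : Pt F} (hsS : s ∈ S) (hsj : s ≠ pj) (hsk : s ≠ pk)
    (h0 : B.repr s.rep i = 0) : False := by
  have hmem : s.rep ∈ Submodule.span F (Set.range ![pj.rep, pk.rep]) := by
    have hs : s.rep = ∑ m, B.repr s.rep m • B m := (B.sum_repr s.rep).symm
    rw [hs]
    apply Submodule.sum_mem
    intro m _
    rcases eq_or_ne m i with rfl | hmi
    · simp [h0]
    · rcases fin3_cases hij hik hjk hmi with rfl | rfl
      · rw [hj]; exact Submodule.smul_mem _ _ (rep_mem_line_left _ _)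
      · rw [hk]; exact Submodule.smul_mem _ _ (rep_mem_line_right _ _)
  exact no3 S hSfin hpj2 hpjS hsS hpkS hsj.symm hpjk hsk (line2 hpjk)
    (submodule_le_of_rep_mem (rep_mem_line_left _ _))
    (submodule_le_of_rep_mem hmem)
    (submodule_le_of_rep_mem (rep_mem_line_right _ _))

lemma inj_aux (S : Set (Pt F)) (hSfin : S.Finite) (B : Module.Basis (Fin 3) F (Fin 3 → F))
    (i j k : Fin 3) (hij : i ≠ j) (hik : i ≠ k) (hjk : j ≠ k)
    {pi : Pt F} (hi : B i = pi.rep)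
    (hpi2 : ∀ W, IsLine F W → pi.submodule ≤ W → secantCount F S W = 2)
    (hpiS : pi ∈ S)
    {s s' : Pt F} (hsS : s ∈ S) (hs'S : s' ∈ S) (hspi : s ≠ pi) (hs'pi : s' ≠ pi)
    (hk0 : B.repr s.rep k ≠ 0)
    (hcross : B.repr s.rep j * B.repr s'.rep k = B.repr s'.rep j * B.repr s.rep k) :
    s = s' := by
  by_contra hne
  set d := B.repr s.rep k with hd
  set d' := B.repr s'.rep k with hd'
  set v := d • s'.rep - d' • s.rep with hv
  have hrv : ∀ m, B.repr v m = d * B.repr s'.rep m - d' * B.repr s.rep m := by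
    intro m
    rw [hv, map_sub, map_smul, map_smul]
    simp [smul_eq_mul]
  have hvj : B.repr v j = 0 := by
    rw [hrv]
    linear_combination -hcross
  have hvk : B.repr v k = 0 := by
    rw [hrv, hd, hd']; ring
  have hval : v = B.repr v i • B i := by
    conv_lhs => rw [← B.sum_repr v]
    refine Finset.sum_eq_single i ?_ (by simp)
    intro m _ hmi
    rcases fin3_cases hij hik hjk hmi with rfl | rfl
    · rw [hvj, zero_smul]
    · rw [hvk, zero_smul]
  have h1 : d • s'.rep = d' • s.rep + B.repr v i • B i := by
    rw [← hval, hv]; abel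
  have h2 : s'.rep = d⁻¹ • (d' • s.rep + B.repr v i • B i) := by
    rw [← h1, smul_smul, inv_mul_cancel₀ hk0, one_smul]
  have hs'mem : s'.rep ∈ Submodule.span F (Set.range ![pi.rep, s.rep]) := by
    rw [h2, hi]
    exact Submodule.smul_mem _ _ (Submodule.add_mem _
      (Submodule.smul_mem _ _ (rep_mem_line_right _ _))
      (Submodule.smul_mem _ _ (rep_mem_line_left _ _)))
  exact no3 S hSfin hpi2 hpiS hsS hs'S hspi.symm hs'pi.symm hne (line2 hspi.symm)
    (submodule_le_of_rep_mem (rep_mem_line_left _ _))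
    (submodule_le_of_rep_mem (rep_mem_line_right _ _))
    (submodule_le_of_rep_mem hs'mem)

end Aux

/-- If every one of the `q+1` lines through `x ∈ S` is a bi-secant of `S`, for `|S| = q + 2`
and `q` odd, then there are at most two such points. -/
theorem card_weight_zero_le_two (F : Type) [Field F] [Fintype F]
    (hq : Odd (Fintype.card F))
    (S : Set (Pt F)) (hS : S.ncard = Fintype.card F + 2) :
    {x ∈ S | ∀ W : Submodule F (Fin 3 → F), IsLine F W → x.submodule ≤ W →
      secantCount F S W = 2}.ncard ≤ 2 := by
  classical
  by_contra hcon
  push_neg at hcon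
  have hSfin : S.Finite := by
    by_contra h
    rw [Set.Infinite.ncard h] at hS
    omega
  have hTfin : {x ∈ S | ∀ W : Submodule F (Fin 3 → F), IsLine F W → x.submodule ≤ W →
      secantCount F S W = 2}.Finite := hSfin.subset (fun r hr => hr.1)
  obtain ⟨x, hx, y, hy, z, hz, hxy, hxz, hyz⟩ := (Set.two_lt_ncard hTfin).1 hcon
  obtain ⟨hxS, hx2⟩ := hx
  obtain ⟨hyS, hy2⟩ := hy
  obtain ⟨hzS, hz2⟩ := hz
  -- linear independence of the three representatives
  have hxnot : x.rep ∉ Submodule.span F (Set.range ![y.rep, z.rep]) := by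
    intro hmem
    exact no3 S hSfin hy2 hyS hxS hzS hxy.symm hyz hxz (line2 hyz)
      (submodule_le_of_rep_mem (rep_mem_line_left _ _))
      (submodule_le_of_rep_mem hmem)
      (submodule_le_of_rep_mem (rep_mem_line_right _ _))
  have htri : LinearIndependent F ![x.rep, y.rep, z.rep] := by
    rw [show ![x.rep, y.rep, z.rep] = Fin.cons x.rep ![y.rep, z.rep] from rfl,
      linearIndependent_fin_cons]
    exact ⟨pair_indep hyz, hxnot⟩
  have hcard3 : Fintype.card (Fin 3) = Module.finrank F (Fin 3 → F) := by
    simp [Module.finrank_fin_fun]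
  set B := basisOfLinearIndependentOfCardEqFinrank htri hcard3 with hBdef
  have hB : ⇑B = ![x.rep, y.rep, z.rep] :=
    coe_basisOfLinearIndependentOfCardEqFinrank htri hcard3
  have hB0 : B 0 = x.rep := by rw [hB]; rfl
  have hB1 : B 1 = y.rep := by rw [hB]; rfl
  have hB2 : B 2 = z.rep := by rw [hB]; rfl
  -- the remaining points
  set S' := S \ {x, y, z} with hS'def
  have hS'fin : S'.Finite := hSfin.diff
  have hsubS : ({x, y, z} : Set (Pt F)) ⊆ S := by
    rintro r (rfl | rfl | rfl) <;> assumption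
  have h3card : ({x, y, z} : Set (Pt F)).ncard = 3 := by
    rw [Set.ncard_insert_of_notMem (by simp [hxy, hxz]) (Set.toFinite _),
      Set.ncard_pair hyz]
  have hS'card : S'.ncard = Fintype.card F - 1 := by
    rw [hS'def, Set.ncard_diff hsubS (Set.toFinite _), hS, h3card]
    omega
  set A := hS'fin.toFinset with hAdef
  have hAmem : ∀ s : {a // a ∈ A}, s.1 ∈ S ∧ s.1 ≠ x ∧ s.1 ≠ y ∧ s.1 ≠ z := by
    intro s
    have hm := hS'fin.mem_toFinset.1 s.2
    have h2 := hm.2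
    simp only [Set.mem_insert_iff, Set.mem_singleton_iff, not_or] at h2
    exact ⟨hm.1, h2.1, h2.2.1, h2.2.2⟩
  -- nonzero coordinates
  have key0 : ∀ s : {a // a ∈ A}, B.repr s.1.rep 0 ≠ 0 := by
    intro s h0
    obtain ⟨hsS, hsx, hsy, hsz⟩ := hAmem s
    exact coord_zero_aux S hSfin B 0 1 2 (by decide) (by decide) (by decide) hB1 hB2
      hy2 hyS hzS hyz hsS hsy hsz h0
  have key1 : ∀ s : {a // a ∈ A}, B.repr s.1.rep 1 ≠ 0 := by
    intro s h0
    obtain ⟨hsS, hsx, hsy, hsz⟩ := hAmem s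
    exact coord_zero_aux S hSfin B 1 0 2 (by decide) (by decide) (by decide) hB0 hB2
      hx2 hxS hzS hxz hsS hsx hsz h0
  have key2 : ∀ s : {a // a ∈ A}, B.repr s.1.rep 2 ≠ 0 := by
    intro s h0
    obtain ⟨hsS, hsx, hsy, hsz⟩ := hAmem s
    exact coord_zero_aux S hSfin B 2 0 1 (by decide) (by decide) (by decide) hB0 hB1
      hx2 hxS hyS hxy hsS hsx hsy h0
  -- the three ratio maps into the units
  set g0 : {a // a ∈ A} → Fˣ := fun s =>
    Units.mk0 (B.repr s.1.rep 1 / B.repr s.1.rep 2) (div_ne_zero (key1 s) (key2 s)) with hg0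
  set g1 : {a // a ∈ A} → Fˣ := fun s =>
    Units.mk0 (B.repr s.1.rep 2 / B.repr s.1.rep 0) (div_ne_zero (key2 s) (key0 s)) with hg1
  set g2 : {a // a ∈ A} → Fˣ := fun s =>
    Units.mk0 (B.repr s.1.rep 0 / B.repr s.1.rep 1) (div_ne_zero (key0 s) (key1 s)) with hg2
  have hinj0 : Function.Injective g0 := by
    intro s s' h
    apply Subtype.ext
    have hval := congrArg Units.val h
    simp only [hg0, Units.val_mk0] at hval
    have hcross := (div_eq_div_iff (key2 s) (key2 s')).1 hval
    exact inj_aux S hSfin B 0 1 2 (by decide) (by decide) (by decide) hB0 hx2 hxS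
      (hAmem s).1 (hAmem s').1 (hAmem s).2.1 (hAmem s').2.1 (key2 s) hcross
  have hinj1 : Function.Injective g1 := by
    intro s s' h
    apply Subtype.ext
    have hval := congrArg Units.val h
    simp only [hg1, Units.val_mk0] at hval
    have hcross := (div_eq_div_iff (key0 s) (key0 s')).1 hval
    exact inj_aux S hSfin B 1 2 0 (by decide) (by decide) (by decide) hB1 hy2 hyS
      (hAmem s).1 (hAmem s').1 (hAmem s).2.2.1 (hAmem s').2.2.1 (key0 s) hcross
  have hinj2 : Function.Injective g2 := by
    intro s s' h
    apply Subtype.ext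
    have hval := congrArg Units.val h
    simp only [hg2, Units.val_mk0] at hval
    have hcross := (div_eq_div_iff (key1 s) (key1 s')).1 hval
    exact inj_aux S hSfin B 2 0 1 (by decide) (by decide) (by decide) hB2 hz2 hzS
      (hAmem s).1 (hAmem s').1 (hAmem s).2.2.2 (hAmem s').2.2.2 (key1 s) hcross
  have hAcard : Fintype.card {a // a ∈ A} = Fintype.card Fˣ := by
    rw [Fintype.card_coe, ← Set.ncard_eq_toFinset_card _ hS'fin, hS'card,
      Fintype.card_units]
  have hbij0 : Function.Bijective g0 :=
    (Fintype.bijective_iff_injective_and_card g0).2 ⟨hinj0, hAcard⟩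
  have hbij1 : Function.Bijective g1 :=
    (Fintype.bijective_iff_injective_and_card g1).2 ⟨hinj1, hAcard⟩
  have hbij2 : Function.Bijective g2 :=
    (Fintype.bijective_iff_injective_and_card g2).2 ⟨hinj2, hAcard⟩
  have hprod0 : ∏ s : {a // a ∈ A}, g0 s = -1 := by
    rw [← FiniteField.prod_univ_units_id_eq_neg_one (K := F)]
    exact Fintype.prod_bijective g0 hbij0 _ _ (fun s => rfl)
  have hprod1 : ∏ s : {a // a ∈ A}, g1 s = -1 := by
    rw [← FiniteField.prod_univ_units_id_eq_neg_one (K := F)]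
    exact Fintype.prod_bijective g1 hbij1 _ _ (fun s => rfl)
  have hprod2 : ∏ s : {a // a ∈ A}, g2 s = -1 := by
    rw [← FiniteField.prod_univ_units_id_eq_neg_one (K := F)]
    exact Fintype.prod_bijective g2 hbij2 _ _ (fun s => rfl)
  have hone : ∀ s : {a // a ∈ A}, g0 s * g1 s * g2 s = 1 := by
    intro s
    apply Units.ext
    have h0 := key0 s; have h1 := key1 s; have h2 := key2 s
    simp only [hg0, hg1, hg2, Units.val_mul, Units.val_mk0, Units.val_one]
    field_simp
  have hall : (∏ s : {a // a ∈ A}, g0 s) * (∏ s : {a // a ∈ A}, g1 s) *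
      (∏ s : {a // a ∈ A}, g2 s) = 1 := by
    rw [← Finset.prod_mul_distrib, ← Finset.prod_mul_distrib]
    exact Finset.prod_eq_one (fun s _ => hone s)
  rw [hprod0, hprod1, hprod2] at hall
  have hneg1 : (-1 : Fˣ) = 1 := by
    rwa [neg_mul_neg, one_mul, one_mul] at hall
  have hneg : (-1 : F) = 1 := by
    simpa using congrArg Units.val hneg1
  have h2zero : (2 : F) = 0 := by linear_combination -hneg
  have hdvd : ringChar F ∣ 2 := by
    have := ringChar.charP F
    exact (CharP.cast_eq_zero_iff F (ringChar F) 2).1 (by exact_mod_cast h2zero)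
  have hchar : ringChar F = 2 :=
    ((Nat.dvd_prime Nat.prime_two).1 hdvd).resolve_left CharP.ringChar_ne_one
  have heven := FiniteField.even_card_of_char_two hchar
  rw [Nat.odd_iff] at hq
  omega
end

section
/- Under the setup described in the context, for all pairwise distinct w, x, y, z ∈ S'∖{e}: det(w,x,z)·g_w(y)·g_z(w)·b_{yx}(w) = det(w,x,y)·g_w(z)·g_y(w)·b_{zx}(w), where det(u,v,t) denotes the determinant of the 3×3 matrix whose rows are the fixed vector representatives of u, v, t. -/
open Projectivization

namespace DGB
open Module
variable {F : Type} [Field F]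

noncomputable def dtr (u v : Fin 3 → F) : (Fin 3 → F) →ₗ[F] F :=
  (u 1 * v 2 - u 2 * v 1) • LinearMap.proj 0 +
  (u 2 * v 0 - u 0 * v 2) • LinearMap.proj 1 +
  (u 0 * v 1 - u 1 * v 0) • LinearMap.proj 2

lemma dtr_apply (u v w : Fin 3 → F) :
    dtr u v w = (u 1 * v 2 - u 2 * v 1) * w 0 + (u 2 * v 0 - u 0 * v 2) * w 1 +
      (u 0 * v 1 - u 1 * v 0) * w 2 := by
  simp [dtr]

lemma dtr_det (u v w : Fin 3 → F) : dtr u v w = (Matrix.of ![u, v, w]).det := by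
  rw [Matrix.det_fin_three]; simp [dtr_apply]; ring

lemma dtr_apply_left (u v : Fin 3 → F) : dtr u v u = 0 := by simp [dtr_apply]; ring
lemma dtr_apply_right (u v : Fin 3 → F) : dtr u v v = 0 := by simp [dtr_apply]; ring
lemma dtr_swap (u v w : Fin 3 → F) : dtr v u w = -dtr u v w := by simp [dtr_apply]; ring
lemma dtr_rot (u v w : Fin 3 → F) : dtr u v w = dtr w u v := by simp [dtr_apply]; ring
lemma dtr_swap23 (u v w : Fin 3 → F) : dtr u w v = -dtr u v w := by simp [dtr_apply]; ring

lemma le_ker_iff (p : Pt F) (h : (Fin 3 → F) →ₗ[F] F) :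
    p.submodule ≤ LinearMap.ker h ↔ h p.rep = 0 := by
  rw [Projectivization.submodule_eq, Submodule.span_singleton_le_iff_mem, LinearMap.mem_ker]

lemma indep_reps {p q : Pt F} (hpq : p ≠ q) : LinearIndependent F ![p.rep, q.rep] := by
  have h := (independent_pair_iff_ne p q).2 hpq
  rw [independent_iff] at h
  have h2 : Projectivization.rep ∘ ![p, q] = ![p.rep, q.rep] := by
    funext i; fin_cases i <;> rfl
  rwa [h2] at h

lemma dtr_ne_zero_of {a b s : Fin 3 → F} (h2 : LinearIndependent F ![a, b])
    (hs : s ∉ Submodule.span F {a, b}) : dtr a b s ≠ 0 := by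
  have h3 : LinearIndependent F ![s, a, b] := by
    apply linearIndependent_fin_cons.2
    refine ⟨h2, ?_⟩
    rwa [Matrix.range_cons_cons_empty]
  have h3' : LinearIndependent F (fun i => Matrix.of ![s, a, b] i) := h3
  have hu : IsUnit (Matrix.of ![s, a, b]) := Matrix.linearIndependent_rows_iff_isUnit.1 h3'
  have hd : (Matrix.of ![s, a, b]).det ≠ 0 :=
    isUnit_iff_ne_zero.1 ((Matrix.isUnit_iff_isUnit_det _).1 hu)
  rw [dtr_rot, dtr_det]
  exact hd

lemma indep_of_dtr_ne {a b c : Fin 3 → F} (hd : dtr a b c ≠ 0) :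
    LinearIndependent F ![a, b, c] := by
  rw [dtr_det] at hd
  have := Matrix.linearIndependent_rows_iff_isUnit.2
    ((Matrix.isUnit_iff_isUnit_det (Matrix.of ![a, b, c])).2 (isUnit_iff_ne_zero.2 hd))
  exact this

lemma span_top_of_dtr_ne {a b c : Fin 3 → F} (hd : dtr a b c ≠ 0) :
    Submodule.span F (Set.range ![a, b, c]) = ⊤ :=
  (indep_of_dtr_ne hd).span_eq_top_of_card_eq_finrank
    (by rw [Module.finrank_fin_fun]; simp)

lemma dtr_eq_zero_of_mem {a b s : Fin 3 → F} (hs : s ∈ Submodule.span F {a, b}) :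
    dtr a b s = 0 := by
  obtain ⟨m, n, rfl⟩ := Submodule.mem_span_pair.1 hs
  simp [map_add, map_smul, dtr_apply_left, dtr_apply_right]

lemma sup_eq_span (p q : Pt F) :
    p.submodule ⊔ q.submodule = Submodule.span F {p.rep, q.rep} := by
  rw [Projectivization.submodule_eq, Projectivization.submodule_eq, ← Submodule.span_union,
    Set.singleton_union]

lemma le_sup_iff {p q : Pt F} (r : Pt F) (hpq : p ≠ q) :
    r.submodule ≤ p.submodule ⊔ q.submodule ↔ dtr p.rep q.rep r.rep = 0 := by
  rw [sup_eq_span, Projectivization.submodule_eq, Submodule.span_singleton_le_iff_mem]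
  constructor
  · exact dtr_eq_zero_of_mem
  · intro h
    by_contra hmem
    exact dtr_ne_zero_of (indep_reps hpq) hmem h

lemma isLine_sup {p q : Pt F} (hpq : p ≠ q) : IsLine F (p.submodule ⊔ q.submodule) := by
  rw [sup_eq_span]
  have h := finrank_span_eq_card (R := F) (indep_reps hpq)
  have h2 : Set.range ![p.rep, q.rep] = {p.rep, q.rep} := Matrix.range_cons_cons_empty _ _ _
  rw [h2] at h
  simpa [IsLine] using h

lemma isLine_ker {h : (Fin 3 → F) →ₗ[F] F} (hh : h ≠ 0) : IsLine F (LinearMap.ker h) := by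
  obtain ⟨v, hv⟩ : ∃ v, h v ≠ 0 := by
    by_contra hc
    push_neg at hc
    exact hh (by ext u; simp [hc])
  have hr : LinearMap.range h = ⊤ :=
    LinearMap.range_eq_top.2 (fun c => ⟨(c * (h v)⁻¹) • v, by rw [map_smul, smul_eq_mul, inv_mul_cancel_right₀ hv]⟩)
  have h3 := LinearMap.finrank_range_add_finrank_ker h
  rw [hr, finrank_top, Module.finrank_fin_fun, Module.finrank_self] at h3
  simpa [IsLine] using by omega

lemma line_eq_of_le {W W' : Submodule F (Fin 3 → F)} (hW : IsLine F W) (hW' : IsLine F W')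
    (hle : W ≤ W') : W = W' :=
  Submodule.eq_of_le_of_finrank_le hle (by rw [IsLine] at hW hW'; omega)

section Main
variable [Fintype F]

instance : Finite (Pt F) := Quotient.finite _

structure Setup (S S' : Set (Pt F)) (f g : Pt F → ((Fin 3 → F) →ₗ[F] F)) : Prop where
  hS : S.ncard = Fintype.card F + 2
  hS' : S' ⊆ S43 F S
  hf : ∀ x ∈ S', f x ≠ 0 ∧ x.submodule ≤ LinearMap.ker (f x) ∧
      secantCount F S (LinearMap.ker (f x)) = 1
  hg : ∀ x ∈ S', g x ≠ 0 ∧ x.submodule ≤ LinearMap.ker (g x) ∧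
      secantCount F S (LinearMap.ker (g x)) = 3
  hbi : ∀ x ∈ S', ∀ y ∈ S', x ≠ y → secantCount F S (x.submodule ⊔ y.submodule) = 2

variable {S S' : Set (Pt F)} {f g : Pt F → ((Fin 3 → F) →ₗ[F] F)}

lemma Setup.memS (H : Setup S S' f g) {a : Pt F} (ha : a ∈ S') : a ∈ S := (H.hS' ha).1

lemma Setup.not_collinear (H : Setup S S' f g) {a b s : Pt F} (ha : a ∈ S') (hb : b ∈ S')
    (hab : a ≠ b) (hs : s ∈ S) (hsa : s ≠ a) (hsb : s ≠ b) :
    dtr a.rep b.rep s.rep ≠ 0 := by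
  intro h0
  have hle : s.submodule ≤ a.submodule ⊔ b.submodule := (le_sup_iff s hab).2 h0
  have h2 : secantCount F S (a.submodule ⊔ b.submodule) = 2 := H.hbi a ha b hb hab
  have hsub : ({a, b, s} : Set (Pt F)) ⊆ {p ∈ S | p.submodule ≤ a.submodule ⊔ b.submodule} := by
    rintro p (rfl | rfl | rfl)
    · exact ⟨H.memS ha, le_sup_left⟩
    · exact ⟨H.memS hb, le_sup_right⟩
    · exact ⟨hs, hle⟩
  have h3 : ({a, b, s} : Set (Pt F)).ncard = 3 := by
    rw [Set.ncard_insert_of_notMem (by simp [hab, hsa.symm]),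
        Set.ncard_insert_of_notMem (by simp [hsb.symm]), Set.ncard_singleton]
  have h4 : ({a, b, s} : Set (Pt F)).ncard ≤ 2 := by
    rw [← h2]
    exact Set.ncard_le_ncard hsub (Set.toFinite _)
  omega

lemma Setup.form_nv (H : Setup S S' f g) {a b : Pt F} (ha : a ∈ S') (hb : b ∈ S') (hab : a ≠ b)
    {φ : (Fin 3 → F) →ₗ[F] F} (hφ : φ ≠ 0) (hker : a.submodule ≤ LinearMap.ker φ)
    (hcnt : secantCount F S (LinearMap.ker φ) ≠ 2) : φ b.rep ≠ 0 := by
  intro h0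
  have hble : b.submodule ≤ LinearMap.ker φ := (le_ker_iff b φ).2 h0
  have heq : a.submodule ⊔ b.submodule = LinearMap.ker φ :=
    line_eq_of_le (isLine_sup hab) (isLine_ker hφ) (sup_le hker hble)
  exact hcnt (heq ▸ H.hbi a ha b hb hab)

lemma Setup.f_nv (H : Setup S S' f g) {a b : Pt F} (ha : a ∈ S') (hb : b ∈ S') (hab : a ≠ b) :
    f a b.rep ≠ 0 :=
  H.form_nv ha hb hab (H.hf a ha).1 (H.hf a ha).2.1 (by simp [(H.hf a ha).2.2])

lemma Setup.g_nv (H : Setup S S' f g) {a b : Pt F} (ha : a ∈ S') (hb : b ∈ S') (hab : a ≠ b) :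
    g a b.rep ≠ 0 :=
  H.form_nv ha hb hab (H.hg a ha).1 (H.hg a ha).2.1 (by simp [(H.hg a ha).2.2])

omit [Fintype F] in
lemma span_forms {A B C : Fin 3 → F} (hΔ : dtr A B C ≠ 0)
    (φ : (Fin 3 → F) →ₗ[F] F) (hφa : φ A = 0) :
    dtr A B C • φ = φ C • dtr A B - φ B • dtr A C := by
  apply LinearMap.ext_on (span_top_of_dtr_ne hΔ)
  rintro v ⟨i, rfl⟩
  fin_cases i <;>
    simp [hφa, dtr_apply_left, dtr_apply_right, dtr_swap23 A B C] <;> ring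

/-- The pencil of lines through the point spanned by `A`. -/
noncomputable def pcl (A B C : Fin 3 → F) (ξ : F) : (Fin 3 → F) →ₗ[F] F :=
  dtr A B - ξ • dtr A C

omit [Fintype F] in
lemma pcl_A (A B C : Fin 3 → F) (ξ : F) : pcl A B C ξ A = 0 := by
  simp [pcl, dtr_apply_left]

omit [Fintype F] in
lemma pcl_B (A B C : Fin 3 → F) (ξ : F) : pcl A B C ξ B = ξ * dtr A B C := by
  simp [pcl, dtr_apply_right, dtr_swap23 A B C]

omit [Fintype F] in
lemma pcl_C (A B C : Fin 3 → F) (ξ : F) : pcl A B C ξ C = dtr A B C := by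
  simp [pcl, dtr_apply_right]

omit [Fintype F] in
lemma pcl_apply (A B C : Fin 3 → F) (ξ : F) (v : Fin 3 → F) :
    pcl A B C ξ v = dtr A B v - ξ * dtr A C v := by
  simp [pcl]

omit [Fintype F] in
lemma pcl_ne {A B C : Fin 3 → F} (hΔ : dtr A B C ≠ 0) (ξ : F) : pcl A B C ξ ≠ 0 := by
  intro h0
  apply hΔ
  have := DFunLike.congr_fun h0 C
  simpa [pcl_C] using this

omit [Fintype F] in
lemma ker_form_eq {A B C : Fin 3 → F} (hΔ : dtr A B C ≠ 0)
    {φ : (Fin 3 → F) →ₗ[F] F} (hφa : φ A = 0) (hφc : φ C ≠ 0) :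
    LinearMap.ker φ = LinearMap.ker (pcl A B C (φ B / φ C)) := by
  have key : φ C • pcl A B C (φ B / φ C) = dtr A B C • φ := by
    rw [pcl, smul_sub, smul_smul, mul_div_cancel₀ _ hφc, span_forms hΔ φ hφa]
  have h2 := congrArg (LinearMap.ker) key
  rw [LinearMap.ker_smul _ _ hφc, LinearMap.ker_smul _ _ hΔ] at h2
  exact h2.symm

omit [Fintype F] in
lemma pcl_inj {A B C : Fin 3 → F} (hΔ : dtr A B C ≠ 0) {ξ₁ ξ₂ : F}
    (h : LinearMap.ker (pcl A B C ξ₁) = LinearMap.ker (pcl A B C ξ₂)) : ξ₁ = ξ₂ := by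
  set Δ := dtr A B C with hΔdef
  have hv1 : (Δ • B - (ξ₁ * Δ) • C) ∈ LinearMap.ker (pcl A B C ξ₁) := by
    rw [LinearMap.mem_ker, map_sub, map_smul, map_smul, pcl_B, pcl_C]
    simp [smul_eq_mul]; ring
  rw [h, LinearMap.mem_ker, map_sub, map_smul, map_smul, pcl_B, pcl_C] at hv1
  simp only [smul_eq_mul] at hv1
  have : Δ * Δ * (ξ₂ - ξ₁) = 0 := by linear_combination hv1
  rcases mul_eq_zero.1 this with h' | h'
  · exact absurd h' (mul_ne_zero hΔ hΔ)
  · exact (sub_eq_zero.1 h').symm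

omit [Fintype F] in
lemma pcl_ne_none {A B C : Fin 3 → F} (hΔ : dtr A B C ≠ 0) (ξ : F) :
    LinearMap.ker (pcl A B C ξ) ≠ LinearMap.ker (dtr A C) := by
  intro h
  have hC : C ∈ LinearMap.ker (dtr A C) := by simp [LinearMap.mem_ker, dtr_apply_right]
  rw [← h, LinearMap.mem_ker, pcl_C] at hC
  exact hΔ hC

omit [Fintype F] in
lemma exists_frame {A : Fin 3 → F} (hA : A ≠ 0) : ∃ B C, dtr A B C ≠ 0 := by
  have h : ∃ i, A i ≠ 0 := by
    by_contra hc
    push_neg at hc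
    exact hA (funext hc)
  obtain ⟨i, hi⟩ := h
  fin_cases i
  · exact ⟨Pi.single 1 1, Pi.single 2 1, by simpa [dtr_apply, Pi.single_apply] using hi⟩
  · exact ⟨Pi.single 2 1, Pi.single 0 1, by simpa [dtr_apply, Pi.single_apply] using hi⟩
  · exact ⟨Pi.single 0 1, Pi.single 1 1, by simpa [dtr_apply, Pi.single_apply] using hi⟩

omit [Fintype F] in
lemma line_through_eq {a : Pt F} {B C : Fin 3 → F} (hΔ : dtr a.rep B C ≠ 0)
    {W : Submodule F (Fin 3 → F)} (hW : IsLine F W) (haW : a.submodule ≤ W) :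
    W = LinearMap.ker (dtr a.rep C) ∨ ∃ ξ, W = LinearMap.ker (pcl a.rep B C ξ) := by
  have hfr : finrank F (Fin 3 → F) = 3 := Module.finrank_fin_fun F
  have hW2 : finrank F W = 2 := hW
  have hq : finrank F ((Fin 3 → F) ⧸ W) = 1 := by
    have h := Submodule.finrank_quotient_add_finrank W
    rw [hfr, hW2] at h
    omega
  let ψ : ((Fin 3 → F) ⧸ W) ≃ₗ[F] F :=
    LinearEquiv.ofFinrankEq _ _ (by rw [hq, Module.finrank_self])
  set φ := ψ.toLinearMap ∘ₗ W.mkQ with hφdef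
  have hker : LinearMap.ker φ = W := by
    rw [hφdef, LinearMap.ker_comp, LinearEquiv.ker, Submodule.comap_bot, Submodule.ker_mkQ]
  have hφa : φ a.rep = 0 := by
    have h : a.rep ∈ W := haW (by
      rw [Projectivization.submodule_eq]
      exact Submodule.mem_span_singleton_self _)
    rw [← hker] at h
    exact h
  have hφ0 : φ ≠ 0 := by
    intro h0
    rw [h0, LinearMap.ker_zero] at hker
    rw [← hker, finrank_top, hfr] at hW2
    omega
  by_cases hφc : φ C = 0
  · left
    have hφb : φ B ≠ 0 := by
      intro hb0
      apply hφ0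
      have h : dtr a.rep B C • φ = 0 := by
        rw [span_forms hΔ φ hφa, hφc, hb0]
        simp
      exact (smul_eq_zero.1 h).resolve_left hΔ
    have h : dtr a.rep B C • φ = (-φ B) • dtr a.rep C := by
      rw [span_forms hΔ φ hφa, hφc]
      rw [zero_smul, zero_sub]
      ext v
      simp
    have h2 := congrArg (LinearMap.ker) h
    rw [LinearMap.ker_smul _ _ hΔ, LinearMap.ker_smul _ _ (neg_ne_zero.2 hφb)] at h2
    rw [← hker, h2]
  · right
    exact ⟨φ B / φ C, by rw [← hker, ker_form_eq hΔ hφa hφc]⟩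

lemma Setup.classify (H : Setup S S' f g) {a : Pt F} (ha : a ∈ S')
    {W : Submodule F (Fin 3 → F)} (hW : IsLine F W) (haW : a.submodule ≤ W) :
    (secantCount F S W = 1 ∧ W = LinearMap.ker (f a)) ∨ secantCount F S W = 2 ∨
    (secantCount F S W = 3 ∧ W = LinearMap.ker (g a)) := by
  obtain ⟨haS, h1, h3, h2⟩ := H.hS' ha
  obtain ⟨B, C, hΔ⟩ := exists_frame (Projectivization.rep_nonzero a)
  set m : Option F → Submodule F (Fin 3 → F) :=
    fun o => o.elim (LinearMap.ker (dtr a.rep C)) (fun ξ => LinearMap.ker (pcl a.rep B C ξ))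
    with hm
  set T : Set (Submodule F (Fin 3 → F)) := {W | IsLine F W ∧ a.submodule ≤ W} with hTdef
  have hmT : ∀ o, m o ∈ T := by
    rintro (_ | ξ)
    · constructor
      · apply isLine_ker
        intro h0
        apply hΔ
        have := DFunLike.congr_fun h0 B
        simp only [LinearMap.zero_apply] at this
        rw [dtr_swap23] at this
        simpa using (neg_eq_zero.1 this)
      · exact (le_ker_iff a _).2 (dtr_apply_left _ _)
    · exact ⟨isLine_ker (pcl_ne hΔ ξ), (le_ker_iff a _).2 (pcl_A _ _ _ _)⟩
  have hminj : Function.Injective m := by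
    rintro (_ | ξ₁) (_ | ξ₂) heq
    · rfl
    · exact absurd heq.symm (pcl_ne_none hΔ ξ₂)
    · exact absurd heq (pcl_ne_none hΔ ξ₁)
    · exact congrArg some (pcl_inj hΔ heq)
  have hTr : T = Set.range m := by
    ext V
    constructor
    · rintro ⟨hV1, hV2⟩
      rcases line_through_eq hΔ hV1 hV2 with h | ⟨ξ, h⟩
      · exact ⟨none, h.symm⟩
      · exact ⟨some ξ, h.symm⟩
    · rintro ⟨o, rfl⟩
      exact hmT o
  have hTfin : T.Finite := by rw [hTr]; exact Set.finite_range m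
  have hTcard : T.ncard = Fintype.card F + 1 := by
    rw [hTr, ← Nat.card_coe_set_eq, Nat.card_range_of_injective hminj,
      Nat.card_eq_fintype_card, Fintype.card_option]
  set T1 : Set (Submodule F (Fin 3 → F)) :=
    {W | IsLine F W ∧ a.submodule ≤ W ∧ secantCount F S W = 1} with hT1def
  set T2 : Set (Submodule F (Fin 3 → F)) :=
    {W | IsLine F W ∧ a.submodule ≤ W ∧ secantCount F S W = 2} with hT2def
  set T3 : Set (Submodule F (Fin 3 → F)) :=
    {W | IsLine F W ∧ a.submodule ≤ W ∧ secantCount F S W = 3} with hT3def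
  have hc1 : T1.ncard = 1 := h1
  have hc3 : T3.ncard = 1 := h3
  have hc2 : T2.ncard = Fintype.card F - 1 := h2
  have hsub : T1 ∪ T2 ∪ T3 ⊆ T := by
    rintro V ((hV | hV) | hV) <;> exact ⟨hV.1, hV.2.1⟩
  have hd12 : Disjoint T1 T2 := Set.disjoint_left.2 (by
    rintro V hV1 hV2
    have := hV1.2.2
    have := hV2.2.2
    omega)
  have hd123 : Disjoint (T1 ∪ T2) T3 := Set.disjoint_left.2 (by
    rintro V (hV | hV) hV3 <;> [skip; skip] <;> first
    | (have := hV.2.2; have := hV3.2.2; omega))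
  have hf1 : T1.Finite := hTfin.subset (fun V hV => hsub (Or.inl (Or.inl hV)))
  have hf2 : T2.Finite := hTfin.subset (fun V hV => hsub (Or.inl (Or.inr hV)))
  have hf3 : T3.Finite := hTfin.subset (fun V hV => hsub (Or.inr hV))
  have hUcard : (T1 ∪ T2 ∪ T3).ncard = T.ncard := by
    rw [Set.ncard_union_eq hd123 (hf1.union hf2) hf3, Set.ncard_union_eq hd12 hf1 hf2,
      hc1, hc2, hc3, hTcard]
    have : 1 ≤ Fintype.card F := Fintype.card_pos
    omega
  have hUT : T1 ∪ T2 ∪ T3 = T :=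
    Set.eq_of_subset_of_ncard_le hsub (le_of_eq hUcard.symm) hTfin
  have hWT : W ∈ T1 ∪ T2 ∪ T3 := by rw [hUT]; exact ⟨hW, haW⟩
  have hfk : LinearMap.ker (f a) ∈ T1 :=
    ⟨isLine_ker (H.hf a ha).1, (H.hf a ha).2.1, (H.hf a ha).2.2⟩
  have hgk : LinearMap.ker (g a) ∈ T3 :=
    ⟨isLine_ker (H.hg a ha).1, (H.hg a ha).2.1, (H.hg a ha).2.2⟩
  obtain ⟨w1, hw1⟩ := Set.ncard_eq_one.1 hc1
  obtain ⟨w3, hw3⟩ := Set.ncard_eq_one.1 hc3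
  have hw1' : w1 = LinearMap.ker (f a) := by
    have := hfk
    rw [hw1] at this
    exact this.symm
  have hw3' : w3 = LinearMap.ker (g a) := by
    have := hgk
    rw [hw3] at this
    exact this.symm
  rcases hWT with (hW1 | hW2) | hW3
  · left
    refine ⟨hW1.2.2, ?_⟩
    have := hW1
    rw [hw1] at this
    rw [Set.mem_singleton_iff.1 this, hw1']
  · exact Or.inr (Or.inl hW2.2.2)
  · right; right
    refine ⟨hW3.2.2, ?_⟩
    have := hW3
    rw [hw3] at this
    rw [Set.mem_singleton_iff.1 this, hw3']

lemma Setup.ker_f_pcl (H : Setup S S' f g) {a b c : Pt F} (ha : a ∈ S') (hb : b ∈ S')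
    (hc : c ∈ S') (hab : a ≠ b) (hac : a ≠ c) (hbc : b ≠ c) :
    LinearMap.ker (f a) = LinearMap.ker (pcl a.rep b.rep c.rep (f a b.rep / f a c.rep)) :=
  ker_form_eq (H.not_collinear ha hb hab (H.memS hc) hac.symm hbc.symm)
    ((le_ker_iff a (f a)).1 (H.hf a ha).2.1) (H.f_nv ha hc hac)

lemma Setup.ker_g_pcl (H : Setup S S' f g) {a b c : Pt F} (ha : a ∈ S') (hb : b ∈ S')
    (hc : c ∈ S') (hab : a ≠ b) (hac : a ≠ c) (hbc : b ≠ c) :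
    LinearMap.ker (g a) = LinearMap.ker (pcl a.rep b.rep c.rep (g a b.rep / g a c.rep)) :=
  ker_form_eq (H.not_collinear ha hb hab (H.memS hc) hac.symm hbc.symm)
    ((le_ker_iff a (g a)).1 (H.hg a ha).2.1) (H.g_nv ha hc hac)

lemma Setup.count_pcl_f (H : Setup S S' f g) {a b c : Pt F} (ha : a ∈ S') (hb : b ∈ S')
    (hc : c ∈ S') (hab : a ≠ b) (hac : a ≠ c) (hbc : b ≠ c) :
    secantCount F S (LinearMap.ker (pcl a.rep b.rep c.rep (f a b.rep / f a c.rep))) = 1 := by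
  rw [← H.ker_f_pcl ha hb hc hab hac hbc]
  exact (H.hf a ha).2.2

lemma Setup.count_pcl_g (H : Setup S S' f g) {a b c : Pt F} (ha : a ∈ S') (hb : b ∈ S')
    (hc : c ∈ S') (hab : a ≠ b) (hac : a ≠ c) (hbc : b ≠ c) :
    secantCount F S (LinearMap.ker (pcl a.rep b.rep c.rep (g a b.rep / g a c.rep))) = 3 := by
  rw [← H.ker_g_pcl ha hb hc hab hac hbc]
  exact (H.hg a ha).2.2

lemma Setup.count_pcl_two (H : Setup S S' f g) {a b c : Pt F} (ha : a ∈ S') (hb : b ∈ S')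
    (hc : c ∈ S') (hab : a ≠ b) (hac : a ≠ c) (hbc : b ≠ c) (ξ : F)
    (hξf : ξ ≠ f a b.rep / f a c.rep) (hξg : ξ ≠ g a b.rep / g a c.rep) :
    secantCount F S (LinearMap.ker (pcl a.rep b.rep c.rep ξ)) = 2 := by
  have hΔ := H.not_collinear ha hb hab (H.memS hc) hac.symm hbc.symm
  rcases H.classify ha (isLine_ker (pcl_ne hΔ ξ)) ((le_ker_iff a _).2 (pcl_A _ _ _ _)) with
    ⟨_, hk⟩ | h2 | ⟨_, hk⟩
  · exfalso
    rw [H.ker_f_pcl ha hb hc hab hac hbc] at hk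
    exact hξf (pcl_inj hΔ hk)
  · exact h2
  · exfalso
    rw [H.ker_g_pcl ha hb hc hab hac hbc] at hk
    exact hξg (pcl_inj hΔ hk)

lemma Setup.count_fiber (H : Setup S S' f g) [DecidableEq F] [DecidableEq (Pt F)]
    {a b c : Pt F} (ha : a ∈ S') (hb : b ∈ S') (hc : c ∈ S')
    (hab : a ≠ b) (hac : a ≠ c) (hbc : b ≠ c) {TT : Finset (Pt F)}
    (hTT : ∀ s, s ∈ TT ↔ s ∈ S ∧ s ≠ a ∧ s ≠ b ∧ s ≠ c) (ξ : F) (hξ0 : ξ ≠ 0) :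
    secantCount F S (LinearMap.ker (pcl a.rep b.rep c.rep ξ)) =
      (TT.filter (fun s => dtr a.rep b.rep s.rep / dtr a.rep c.rep s.rep = ξ)).card + 1 := by
  have hΔ := H.not_collinear ha hb hab (H.memS hc) hac.symm hbc.symm
  have hset : {p ∈ S | p.submodule ≤ LinearMap.ker (pcl a.rep b.rep c.rep ξ)} =
      insert a ↑(TT.filter fun s => dtr a.rep b.rep s.rep / dtr a.rep c.rep s.rep = ξ) := by
    ext p
    constructor
    · rintro ⟨hpS, hple⟩
      have hp0 : pcl a.rep b.rep c.rep ξ p.rep = 0 := (le_ker_iff p _).1 hple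
      by_cases hpa : p = a
      · exact Set.mem_insert_iff.2 (Or.inl hpa)
      by_cases hpb : p = b
      · exfalso; subst hpb; rw [pcl_B] at hp0; exact (mul_ne_zero hξ0 hΔ) hp0
      by_cases hpc : p = c
      · exfalso; subst hpc; rw [pcl_C] at hp0; exact hΔ hp0
      · apply Set.mem_insert_iff.2
        right
        rw [Finset.mem_coe, Finset.mem_filter]
        refine ⟨(hTT p).2 ⟨hpS, hpa, hpb, hpc⟩, ?_⟩
        have hden : dtr a.rep c.rep p.rep ≠ 0 := H.not_collinear ha hc hac hpS hpa hpc
        rw [pcl_apply] at hp0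
        rw [div_eq_iff hden]
        linear_combination hp0
    · intro hp
      rcases Set.mem_insert_iff.1 hp with rfl | hp
      · exact ⟨H.memS ha, (le_ker_iff _ _).2 (pcl_A _ _ _ _)⟩
      · rw [Finset.mem_coe, Finset.mem_filter] at hp
        obtain ⟨hmem, hκ⟩ := hp
        obtain ⟨hpS, hpa, hpb, hpc⟩ := (hTT p).1 hmem
        have hden : dtr a.rep c.rep p.rep ≠ 0 := H.not_collinear ha hc hac hpS hpa hpc
        refine ⟨hpS, (le_ker_iff p _).2 ?_⟩
        rw [pcl_apply]
        rw [div_eq_iff hden] at hκ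
        linear_combination hκ
  have hna : a ∉ (TT.filter fun s => dtr a.rep b.rep s.rep / dtr a.rep c.rep s.rep = ξ) :=
    fun h => (((hTT a).1 (Finset.mem_filter.1 h).1).2.1 rfl)
  unfold secantCount
  rw [hset, Set.ncard_insert_of_notMem (by simpa using hna) (Set.toFinite _),
    Set.ncard_coe_finset]

lemma prod_erase_zero [DecidableEq F] : ∏ ξ ∈ Finset.univ.erase (0 : F), ξ = -1 := by
  have h1 := FiniteField.prod_univ_units_id_eq_neg_one (K := F)
  have h2 : ((∏ x : Fˣ, x : Fˣ) : F) = ∏ x : Fˣ, (x : F) :=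
    map_prod (Units.coeHom F) _ _
  have h3 : ∏ ξ ∈ Finset.univ.erase (0 : F), ξ = ∏ x : Fˣ, (x : F) := by
    symm
    refine Finset.prod_nbij (fun x => (x : F)) ?_ ?_ ?_ ?_
    · intro x _
      exact Finset.mem_erase.2 ⟨x.ne_zero, Finset.mem_univ _⟩
    · intro x _ y _ hxy
      exact Units.ext hxy
    · intro ξ hξ
      exact ⟨Units.mk0 ξ (Finset.mem_erase.1 hξ).1, Finset.mem_coe.2 (Finset.mem_univ _), rfl⟩
    · intro x _
      rfl
  rw [h3, ← h2, h1]
  simp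

lemma Setup.vertex (H : Setup S S' f g) [DecidableEq F] [DecidableEq (Pt F)]
    {a b c : Pt F} (ha : a ∈ S') (hb : b ∈ S') (hc : c ∈ S')
    (hab : a ≠ b) (hac : a ≠ c) (hbc : b ≠ c) {TT : Finset (Pt F)}
    (hTT : ∀ s, s ∈ TT ↔ s ∈ S ∧ s ≠ a ∧ s ≠ b ∧ s ≠ c) :
    (∏ s ∈ TT, dtr a.rep b.rep s.rep) * (g a c.rep * f a b.rep)
      = -(∏ s ∈ TT, dtr a.rep c.rep s.rep) * (g a b.rep * f a c.rep) := by
  have hΔ := H.not_collinear ha hb hab (H.memS hc) hac.symm hbc.symm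
  have hfb := H.f_nv ha hb hab
  have hfc := H.f_nv ha hc hac
  have hgb := H.g_nv ha hb hab
  have hgc := H.g_nv ha hc hac
  set κ : Pt F → F := fun s => dtr a.rep b.rep s.rep / dtr a.rep c.rep s.rep with hκdef
  have hnum : ∀ s ∈ TT, dtr a.rep b.rep s.rep ≠ 0 := by
    intro s hs
    obtain ⟨hsS, hsa, hsb, hsc⟩ := (hTT s).1 hs
    exact H.not_collinear ha hb hab hsS hsa hsb
  have hden : ∀ s ∈ TT, dtr a.rep c.rep s.rep ≠ 0 := by
    intro s hs
    obtain ⟨hsS, hsa, hsb, hsc⟩ := (hTT s).1 hs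
    exact H.not_collinear ha hc hac hsS hsa hsc
  have hκmem : ∀ s ∈ TT, κ s ∈ Finset.univ.erase (0 : F) := by
    intro s hs
    exact Finset.mem_erase.2 ⟨div_ne_zero (hnum s hs) (hden s hs), Finset.mem_univ _⟩
  have hgroup : ∏ s ∈ TT, κ s =
      ∏ ξ ∈ Finset.univ.erase (0 : F), ξ ^ (TT.filter (fun s => κ s = ξ)).card := by
    rw [← Finset.prod_fiberwise_of_maps_to hκmem κ]
    apply Finset.prod_congr rfl
    intro ξ _
    rw [Finset.prod_congr rfl (fun s hs => (Finset.mem_filter.1 hs).2), Finset.prod_const]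
  set ξf := f a b.rep / f a c.rep with hξfdef
  set ξg := g a b.rep / g a c.rep with hξgdef
  have hξf0 : ξf ≠ 0 := div_ne_zero hfb hfc
  have hξg0 : ξg ≠ 0 := div_ne_zero hgb hgc
  have hξfg : ξf ≠ ξg := by
    intro hEq
    have c1 := H.count_pcl_f ha hb hc hab hac hbc
    have c3 := H.count_pcl_g ha hb hc hab hac hbc
    rw [← hξfdef] at c1
    rw [← hξgdef, ← hEq] at c3
    rw [c1] at c3
    exact absurd c3 (by norm_num)
  have hexp : ∀ ξ ∈ Finset.univ.erase (0 : F), (TT.filter (fun s => κ s = ξ)).card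
      = if ξ = ξf then 0 else if ξ = ξg then 2 else 1 := by
    intro ξ hξ
    have hξ0 : ξ ≠ 0 := (Finset.mem_erase.1 hξ).1
    have hcount := H.count_fiber ha hb hc hab hac hbc hTT ξ hξ0
    simp only [hκdef]
    by_cases h1 : ξ = ξf
    · subst h1
      have c1 := H.count_pcl_f ha hb hc hab hac hbc
      rw [← hξfdef] at c1
      rw [c1] at hcount
      rw [if_pos rfl]
      omega
    by_cases h2 : ξ = ξg
    · subst h2
      have c3 := H.count_pcl_g ha hb hc hab hac hbc
      rw [← hξgdef] at c3
      rw [c3] at hcount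
      rw [if_neg h1, if_pos rfl]
      omega
    · have c2 := H.count_pcl_two ha hb hc hab hac hbc ξ h1 h2
      rw [c2] at hcount
      rw [if_neg h1, if_neg h2]
      omega
  have hsplit : ∏ ξ ∈ Finset.univ.erase (0 : F), ξ ^ (TT.filter (fun s => κ s = ξ)).card
      = ∏ ξ ∈ Finset.univ.erase (0 : F),
          (ξ * ((if ξ = ξg then ξg else 1) * (if ξ = ξf then ξf⁻¹ else 1))) := by
    apply Finset.prod_congr rfl
    intro ξ hξ
    rw [hexp ξ hξ]
    by_cases h1 : ξ = ξf
    · subst h1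
      rw [if_pos rfl, if_neg hξfg, if_pos rfl]
      field_simp
    by_cases h2 : ξ = ξg
    · subst h2
      rw [if_neg h1, if_pos rfl, if_pos rfl, if_neg h1]
      ring
    · rw [if_neg h1, if_neg h2, if_neg h2, if_neg h1]
      ring
  have hξgmem : ξg ∈ Finset.univ.erase (0 : F) := Finset.mem_erase.2 ⟨hξg0, Finset.mem_univ _⟩
  have hξfmem : ξf ∈ Finset.univ.erase (0 : F) := Finset.mem_erase.2 ⟨hξf0, Finset.mem_univ _⟩
  have hmain : ∏ s ∈ TT, κ s = -1 * ξg * ξf⁻¹ := by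
    rw [hgroup, hsplit, Finset.prod_mul_distrib, Finset.prod_mul_distrib, prod_erase_zero,
      Finset.prod_ite_eq' (Finset.univ.erase (0 : F)) ξg (fun _ => ξg),
      Finset.prod_ite_eq' (Finset.univ.erase (0 : F)) ξf (fun _ => ξf⁻¹),
      if_pos hξgmem, if_pos hξfmem]
    ring
  have hPAB : ∏ s ∈ TT, κ s = (∏ s ∈ TT, dtr a.rep b.rep s.rep) /
      (∏ s ∈ TT, dtr a.rep c.rep s.rep) := by
    rw [hκdef, Finset.prod_div_distrib]
  have hPC : (∏ s ∈ TT, dtr a.rep c.rep s.rep) ≠ 0 := Finset.prod_ne_zero_iff.2 hden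
  rw [hPAB, hξgdef, hξfdef] at hmain
  field_simp at hmain
  linear_combination hmain

omit [Fintype F] in
/-- Plücker-type identity: four vectors in a 3-dim space are dependent. -/
lemma pl (ℓ : (Fin 3 → F) →ₗ[F] F) (p q r t : Fin 3 → F) :
    dtr p q r * ℓ t - dtr p q t * ℓ r + dtr p r t * ℓ q - dtr q r t * ℓ p = 0 := by
  rw [LinearMap.pi_apply_eq_sum_univ ℓ p, LinearMap.pi_apply_eq_sum_univ ℓ q,
    LinearMap.pi_apply_eq_sum_univ ℓ r, LinearMap.pi_apply_eq_sum_univ ℓ t]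
  simp only [dtr_apply, Fin.sum_univ_three, smul_eq_mul]
  ring

/-- The Segre-type antisymmetry relation. -/
lemma Setup.star (H : Setup S S' f g) [DecidableEq F] [DecidableEq (Pt F)]
    (hq : Odd (Fintype.card F))
    {e u v : Pt F} (he : e ∈ S') (hu : u ∈ S') (hv : v ∈ S')
    (hscale : ∀ x ∈ S', f x e.rep = f e x.rep ∧ g x e.rep = g e x.rep)
    (hue : u ≠ e) (hve : v ≠ e) (huv : u ≠ v) :
    f u v.rep * g v u.rep = -(g u v.rep * f v u.rep) := by
  set TT : Finset (Pt F) := (Set.toFinite S).toFinset \ {u, v, e} with hTTdef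
  have hTTmem : ∀ s, s ∈ TT ↔ s ∈ S ∧ s ≠ u ∧ s ≠ v ∧ s ≠ e := by
    intro s
    rw [hTTdef, Finset.mem_sdiff, Set.Finite.mem_toFinset]
    simp only [Finset.mem_insert, Finset.mem_singleton]
    tauto
  have hTT2 : ∀ s, s ∈ TT ↔ s ∈ S ∧ s ≠ v ∧ s ≠ e ∧ s ≠ u := by
    intro s; rw [hTTmem]; tauto
  have hTT3 : ∀ s, s ∈ TT ↔ s ∈ S ∧ s ≠ e ∧ s ≠ u ∧ s ≠ v := by
    intro s; rw [hTTmem]; tauto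
  have e1 := H.vertex hu hv he huv hue hve hTTmem
  have e2 := H.vertex hv he hu hve huv.symm hue.symm hTT2
  have e3 := H.vertex he hu hv hue.symm hve.symm huv hTT3
  have hcard : TT.card = Fintype.card F - 1 := by
    rw [hTTdef, Finset.card_sdiff_of_subset]
    · rw [← Set.ncard_eq_toFinset_card S (Set.toFinite S), H.hS]
      rw [Finset.card_insert_of_notMem (by simp [huv, hue]),
        Finset.card_insert_of_notMem (by simp [hve]), Finset.card_singleton]
      omega
    · intro s hs
      rw [Set.Finite.mem_toFinset]
      simp only [Finset.mem_insert, Finset.mem_singleton] at hs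
      rcases hs with rfl | rfl | rfl
      · exact H.memS hu
      · exact H.memS hv
      · exact H.memS he
  have heven : Even TT.card := by
    obtain ⟨k, hk⟩ := hq
    rw [hcard, hk]
    exact ⟨k, by omega⟩
  have hswap : ∀ P Q : Fin 3 → F, (∏ s ∈ TT, dtr Q P s.rep) = ∏ s ∈ TT, dtr P Q s.rep := by
    intro P Q
    calc (∏ s ∈ TT, dtr Q P s.rep) = ∏ s ∈ TT, (-1) * dtr P Q s.rep := by
          apply Finset.prod_congr rfl
          intro s _
          rw [dtr_swap]
          ring
      _ = (-1) ^ TT.card * ∏ s ∈ TT, dtr P Q s.rep := by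
          rw [Finset.prod_mul_distrib, Finset.prod_const]
      _ = ∏ s ∈ TT, dtr P Q s.rep := by rw [heven.neg_one_pow]; ring
  rw [hswap u.rep v.rep] at e2
  rw [hswap u.rep e.rep, hswap v.rep e.rep] at e3
  set A1 := ∏ s ∈ TT, dtr u.rep v.rep s.rep with hA1def
  set A2 := ∏ s ∈ TT, dtr v.rep e.rep s.rep with hA2def
  set A3 := ∏ s ∈ TT, dtr u.rep e.rep s.rep with hA3def
  have hA1 : A1 ≠ 0 := Finset.prod_ne_zero_iff.2 (fun s hs => by
    obtain ⟨hsS, hsu, hsv, hse⟩ := (hTTmem s).1 hs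
    exact H.not_collinear hu hv huv hsS hsu hsv)
  have hA2 : A2 ≠ 0 := Finset.prod_ne_zero_iff.2 (fun s hs => by
    obtain ⟨hsS, hsu, hsv, hse⟩ := (hTTmem s).1 hs
    exact H.not_collinear hv he hve hsS hsv hse)
  have hA3 : A3 ≠ 0 := Finset.prod_ne_zero_iff.2 (fun s hs => by
    obtain ⟨hsS, hsu, hsv, hse⟩ := (hTTmem s).1 hs
    exact H.not_collinear hu he hue hsS hsu hse)
  have m1 : (A1 * (g u e.rep * f u v.rep)) * ((A2 * (g v u.rep * f v e.rep))
        * ((A3 * (g e v.rep * f e u.rep))))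
      = (-A3 * (g u v.rep * f u e.rep)) * ((-A1 * (g v e.rep * f v u.rep))
        * ((-A2 * (g e u.rep * f e v.rep)))) := by
    rw [e1, e2, e3]
  have h6 : (g u e.rep * f u v.rep) * ((g v u.rep * f v e.rep) * (g e v.rep * f e u.rep))
      = -((g u v.rep * f u e.rep) * ((g v e.rep * f v u.rep) * (g e u.rep * f e v.rep))) := by
    apply mul_left_cancel₀ (show A1 * A2 * A3 ≠ 0 from
      mul_ne_zero (mul_ne_zero hA1 hA2) hA3)
    linear_combination m1
  obtain ⟨hsf_u, hsg_u⟩ := hscale u hu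
  obtain ⟨hsf_v, hsg_v⟩ := hscale v hv
  rw [hsg_u, hsf_u, hsg_v, hsf_v] at h6
  have hk : g e u.rep * g e v.rep * f e u.rep * f e v.rep ≠ 0 :=
    mul_ne_zero (mul_ne_zero (mul_ne_zero (H.g_nv he hu hue.symm) (H.g_nv he hv hve.symm))
      (H.f_nv he hu hue.symm)) (H.f_nv he hv hve.symm)
  have final : (f u v.rep * g v u.rep) * (g e u.rep * g e v.rep * f e u.rep * f e v.rep)
      = (-(g u v.rep * f v u.rep)) * (g e u.rep * g e v.rep * f e u.rep * f e v.rep) := by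
    linear_combination h6
  exact mul_right_cancel₀ hk final

end Main
end DGB


/-- For all pairwise distinct `w, x, y, z ∈ S' \ {e}`,
`det(w,x,z) g_w(y) g_z(w) b_{yx}(w) = det(w,x,y) g_w(z) g_y(w) b_{zx}(w)`. -/
theorem det_g_b_identity
    (F : Type) [Field F] [Fintype F] (hq : Odd (Fintype.card F))
    (S : Set (Pt F)) (hS : S.ncard = Fintype.card F + 2)
    (S' : Set (Pt F)) (hS' : S' ⊆ S43 F S)
    (f g : Pt F → ((Fin 3 → F) →ₗ[F] F))
    (hf : ∀ x ∈ S', f x ≠ 0 ∧ x.submodule ≤ LinearMap.ker (f x) ∧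
      secantCount F S (LinearMap.ker (f x)) = 1)
    (hg : ∀ x ∈ S', g x ≠ 0 ∧ x.submodule ≤ LinearMap.ker (g x) ∧
      secantCount F S (LinearMap.ker (g x)) = 3)
    (hbi : ∀ x ∈ S', ∀ y ∈ S', x ≠ y → secantCount F S (x.submodule ⊔ y.submodule) = 2)
    (e : Pt F) (he : e ∈ S')
    (hscale : ∀ x ∈ S', f x e.rep = f e x.rep ∧ g x e.rep = g e x.rep)
    (w x y z : Pt F)
    (hw : w ∈ S' \ {e}) (hx : x ∈ S' \ {e}) (hy : y ∈ S' \ {e}) (hz : z ∈ S' \ {e})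
    (hwx : w ≠ x) (hwy : w ≠ y) (hwz : w ≠ z) (hxy : x ≠ y) (hxz : x ≠ z) (hyz : y ≠ z) :
    (Matrix.of ![w.rep, x.rep, z.rep]).det * g w y.rep * g z w.rep *
        (f y w.rep * g x w.rep - g y w.rep * f x w.rep) =
      (Matrix.of ![w.rep, x.rep, y.rep]).det * g w z.rep * g y w.rep *
        (f z w.rep * g x w.rep - g z w.rep * f x w.rep) := by
  classical
  have H : DGB.Setup S S' f g := ⟨hS, hS', hf, hg, hbi⟩
  obtain ⟨hw', hwe'⟩ := hw
  obtain ⟨hx', hxe'⟩ := hx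
  obtain ⟨hy', hye'⟩ := hy
  obtain ⟨hz', hze'⟩ := hz
  have hwe : w ≠ e := by simpa using hwe'
  have hxe : x ≠ e := by simpa using hxe'
  have hye : y ≠ e := by simpa using hye'
  have hze : z ≠ e := by simpa using hze'
  have s1 := H.star hq he hw' hx' hscale hwe hxe hwx
  have s2 := H.star hq he hw' hy' hscale hwe hye hwy
  have s3 := H.star hq he hw' hz' hscale hwe hze hwz
  have hfw0 : f w w.rep = 0 := (DGB.le_ker_iff w (f w)).1 (hf w hw').2.1
  have hgw0 : g w w.rep = 0 := (DGB.le_ker_iff w (g w)).1 (hg w hw').2.1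
  have p1' := DGB.pl (f w) w.rep x.rep y.rep z.rep
  have p2' := DGB.pl (g w) w.rep x.rep y.rep z.rep
  rw [hfw0] at p1'
  rw [hgw0] at p2'
  have hGx : g w x.rep ≠ 0 := H.g_nv hw' hx' hwx
  have hGy : g w y.rep ≠ 0 := H.g_nv hw' hy' hwy
  have hGz : g w z.rep ≠ 0 := H.g_nv hw' hz' hwz
  rw [show (Matrix.of ![w.rep, x.rep, z.rep]).det = DGB.dtr w.rep x.rep z.rep from
      (DGB.dtr_det _ _ _).symm,
    show (Matrix.of ![w.rep, x.rep, y.rep]).det = DGB.dtr w.rep x.rep y.rep from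
      (DGB.dtr_det _ _ _).symm]
  have key : (DGB.dtr w.rep x.rep z.rep * g w y.rep * g z w.rep *
        (f y w.rep * g x w.rep - g y w.rep * f x w.rep) -
      DGB.dtr w.rep x.rep y.rep * g w z.rep * g y w.rep *
        (f z w.rep * g x w.rep - g z w.rep * f x w.rep)) *
        (g w x.rep * g w y.rep * g w z.rep) = 0 := by
    linear_combination
      (DGB.dtr w.rep x.rep z.rep * g w x.rep * g w y.rep * g w z.rep * g x w.rep * g z w.rep) * s2
      + (DGB.dtr w.rep x.rep y.rep * g w y.rep * g w z.rep ^ 2 * g y w.rep * g z w.rep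
          - DGB.dtr w.rep x.rep z.rep * g w y.rep ^ 2 * g w z.rep * g y w.rep * g z w.rep) * s1
      - (DGB.dtr w.rep x.rep y.rep * g w x.rep * g w y.rep * g w z.rep * g x w.rep * g y w.rep) * s3
      + (g x w.rep * g y w.rep * g z w.rep * g w x.rep * g w y.rep * g w z.rep) * p1'
      - (g x w.rep * g y w.rep * g z w.rep * f w x.rep * g w y.rep * g w z.rep) * p2'
  have hne : g w x.rep * g w y.rep * g w z.rep ≠ 0 := mul_ne_zero (mul_ne_zero hGx hGy) hGz
  exact sub_eq_zero.1 ((mul_eq_zero.1 key).resolve_right hne)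
end

section
/- Let q be a prime power and let U be a nonzero finite-dimensional F_q-subspace of the polynomial ring F_q[X_1,X_2,X_3]. Let d be the maximum of the total degrees of the nonzero elements of U. If d ≤ q, then there exist f, g ∈ U such that gcd(f,g) divides every element of U (so gcd(f,g) is a greatest common divisor of the set U). -/
open MvPolynomial Finset

section DegreeLemmas
variable {σ : Type*} {R : Type*} [CommRing R] [IsDomain R]

theorem aux_hc_totalDegree_ne_zero {p : MvPolynomial σ R} (hp : p ≠ 0) :
    homogeneousComponent p.totalDegree p ≠ 0 := by
  classical
  obtain ⟨d, hd, hdeg⟩ := p.support.exists_mem_eq_sup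
    (support_nonempty.mpr hp) (fun s => s.sum fun _ e => e)
  intro h
  have hc := coeff_homogeneousComponent (n := p.totalDegree) d (φ := p)
  rw [h, coeff_zero] at hc
  have hdd : Finsupp.degree d = p.totalDegree := by
    rw [totalDegree, hdeg]; rfl
  rw [if_pos hdd] at hc
  exact (mem_support_iff.mp hd) hc.symm

theorem aux_totalDegree_mul_eq {p q : MvPolynomial σ R} (hp : p ≠ 0) (hq : q ≠ 0) :
    (p * q).totalDegree = p.totalDegree + q.totalDegree := by
  classical
  refine le_antisymm (totalDegree_mul p q) ?_
  set n := p.totalDegree with hn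
  set m := q.totalDegree with hm
  by_contra hcon
  push_neg at hcon
  have hz : homogeneousComponent (n + m) (p * q) = 0 := homogeneousComponent_eq_zero _ _ hcon
  have e1 : p * q = ∑ i ∈ range (n + 1), ∑ j ∈ range (m + 1),
      homogeneousComponent i p * homogeneousComponent j q := by
    conv_lhs => rw [← sum_homogeneousComponent p, ← sum_homogeneousComponent q]
    rw [Finset.sum_mul_sum]
  have key : homogeneousComponent (n + m) (p * q)
      = homogeneousComponent n p * homogeneousComponent m q := by
    rw [e1, map_sum]
    have e2 : ∀ i ∈ range (n + 1), ∀ j ∈ range (m + 1),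
        homogeneousComponent (n + m) (homogeneousComponent i p * homogeneousComponent j q)
          = if i = n ∧ j = m then homogeneousComponent n p * homogeneousComponent m q
            else 0 := by
      intro i hi j hj
      have hmem : homogeneousComponent i p * homogeneousComponent j q
          ∈ homogeneousSubmodule σ R (i + j) :=
        (mem_homogeneousSubmodule _ _).mpr
          ((homogeneousComponent_isHomogeneous i p).mul
            (homogeneousComponent_isHomogeneous j q))
      rw [homogeneousComponent_of_mem hmem]
      simp only [mem_range, Nat.lt_succ_iff] at hi hj
      by_cases hij : i = n ∧ j = m
      · obtain ⟨rfl, rfl⟩ := hij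
        simp
      · have hne : ¬ (n + m = i + j) := by omega
        rw [if_neg hne, if_neg hij]
    calc (∑ i ∈ range (n+1), homogeneousComponent (n+m)
            (∑ j ∈ range (m+1), homogeneousComponent i p * homogeneousComponent j q))
        = ∑ i ∈ range (n+1), ∑ j ∈ range (m+1),
            homogeneousComponent (n+m) (homogeneousComponent i p * homogeneousComponent j q) := by
          refine Finset.sum_congr rfl fun i _ => ?_
          exact map_sum _ _ _
      _ = ∑ i ∈ range (n+1), ∑ j ∈ range (m+1),
            (if i = n ∧ j = m then homogeneousComponent n p * homogeneousComponent m q else 0) :=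
          Finset.sum_congr rfl fun i hi => Finset.sum_congr rfl fun j hj => e2 i hi j hj
      _ = homogeneousComponent n p * homogeneousComponent m q := by
          simp [ite_and, Finset.sum_ite_eq']
  rw [hz] at key
  exact (mul_ne_zero (aux_hc_totalDegree_ne_zero hp) (aux_hc_totalDegree_ne_zero hq)) key.symm

theorem aux_totalDegree_le_of_dvd {a b : MvPolynomial σ R} (h : a ∣ b) (hb : b ≠ 0) :
    a.totalDegree ≤ b.totalDegree := by
  obtain ⟨c, rfl⟩ := h
  have ha : a ≠ 0 := left_ne_zero_of_mul hb
  have hc : c ≠ 0 := right_ne_zero_of_mul hb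
  rw [aux_totalDegree_mul_eq ha hc]
  omega

theorem aux_totalDegree_multiset_prod {s : Multiset (MvPolynomial σ R)}
    (h : ∀ a ∈ s, a ≠ 0) :
    s.prod ≠ 0 ∧ s.prod.totalDegree = (s.map totalDegree).sum := by
  induction s using Multiset.induction_on with
  | empty => simp
  | cons a s ih =>
    have ha : a ≠ 0 := h a (Multiset.mem_cons_self a s)
    obtain ⟨h1, h2⟩ := ih (fun b hb => h b (Multiset.mem_cons_of_mem hb))
    refine ⟨by rw [Multiset.prod_cons]; exact mul_ne_zero ha h1, ?_⟩
    rw [Multiset.prod_cons, aux_totalDegree_mul_eq ha h1, h2, Multiset.map_cons,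
      Multiset.sum_cons]

end DegreeLemmas

theorem aux_prime_totalDegree_pos {σ F : Type*} [Field F] {p : MvPolynomial σ F}
    (hp : Prime p) : 1 ≤ p.totalDegree := by
  classical
  by_contra h
  push_neg at h
  have h0 : p.totalDegree = 0 := by omega
  have hall := (totalDegree_eq_zero_iff σ p).mp h0
  have hpC : p = C (coeff 0 p) := by
    ext d
    by_cases hd : d = 0
    · subst hd; simp
    · rw [coeff_C, if_neg (Ne.symm hd)]
      by_cases hds : d ∈ p.support
      · exact absurd (Finsupp.ext fun x => hall d hds x) hd
      · simpa using (notMem_support_iff.mp hds)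
  have hcne : coeff 0 p ≠ 0 := by
    intro hc
    exact hp.ne_zero (by rw [hpC, hc, C_0])
  exact hp.not_unit (by rw [hpC]; exact (isUnit_iff_ne_zero.mpr hcne).map C)

theorem aux_covering {F : Type} [Field F] [Fintype F] {M : Type*} [AddCommGroup M] [Module F M]
    [Finite M] [Nontrivial M] {ι : Type*} [Fintype ι]
    (hι : Fintype.card ι ≤ Fintype.card F) (W : ι → Submodule F M) (hW : ∀ i, W i ≠ ⊤) :
    ∃ x : M, x ≠ 0 ∧ ∀ i, x ∉ W i := by
  classical
  haveI : Fintype M := Fintype.ofFinite M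
  haveI : FiniteDimensional F M := Module.finite_iff_finite.mpr ‹_›
  by_contra hcon
  push_neg at hcon
  set q := Fintype.card F with hqdef
  have hq : 2 ≤ q := Fintype.one_lt_card
  set N := Fintype.card M with hNdef
  have hWcard : ∀ i, q * Fintype.card (W i) ≤ N := by
    intro i
    have h1 : Fintype.card (W i) = q ^ (Module.finrank F (W i)) := Module.card_eq_pow_finrank
    have h2 : N = q ^ (Module.finrank F M) := Module.card_eq_pow_finrank
    have h3 : Module.finrank F (W i) < Module.finrank F M :=
      Submodule.finrank_lt (hW i)
    rw [h1, h2, ← pow_succ']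
    exact Nat.pow_le_pow_right (by omega) h3
  have hNq : q ≤ N := by
    obtain ⟨x, hx⟩ := exists_ne (0 : M)
    exact Fintype.card_le_of_injective _ (smul_left_injective F hx)
  have hsub : Finset.univ.erase (0 : M) ⊆
      Finset.univ.biUnion (fun i : ι => ((W i : Set M).toFinset.erase 0)) := by
    intro x hx
    obtain ⟨i, hi⟩ := hcon x (Finset.ne_of_mem_erase hx)
    exact Finset.mem_biUnion.mpr ⟨i, Finset.mem_univ i,
      Finset.mem_erase.mpr ⟨Finset.ne_of_mem_erase hx, Set.mem_toFinset.mpr hi⟩⟩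
  have hcard : N - 1 ≤ ∑ i : ι, (Fintype.card (W i) - 1) := by
    have h1 : (Finset.univ.erase (0 : M)).card = N - 1 := by
      rw [Finset.card_erase_of_mem (Finset.mem_univ _), Finset.card_univ]
    calc N - 1 = (Finset.univ.erase (0 : M)).card := h1.symm
      _ ≤ (Finset.univ.biUnion (fun i : ι => ((W i : Set M).toFinset.erase 0))).card :=
          Finset.card_le_card hsub
      _ ≤ ∑ i : ι, ((W i : Set M).toFinset.erase 0).card := Finset.card_biUnion_le
      _ = ∑ i : ι, (Fintype.card (W i) - 1) := by
          refine Finset.sum_congr rfl fun i _ => ?_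
          rw [Finset.card_erase_of_mem (Set.mem_toFinset.mpr (W i).zero_mem),
            Set.toFinset_card]
          rfl
  have hterm : ∀ i : ι, q * (Fintype.card (W i) - 1) ≤ N - q := by
    intro i
    have h := hWcard i
    have hpos : 1 ≤ Fintype.card (W i) := Fintype.card_pos
    have he : q * (Fintype.card (W i) - 1) = q * Fintype.card (W i) - q * 1 :=
      Nat.mul_sub q _ 1
    have hq1 : q * 1 ≤ q * Fintype.card (W i) := Nat.mul_le_mul_left q hpos
    omega
  have hchain : q * (N - 1) ≤ q * (N - q) := by
    calc q * (N - 1) ≤ q * ∑ i : ι, (Fintype.card (W i) - 1) := Nat.mul_le_mul_left q hcard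
      _ = ∑ i : ι, q * (Fintype.card (W i) - 1) := Finset.mul_sum _ _ _
      _ ≤ ∑ _i : ι, (N - q) := Finset.sum_le_sum fun i _ => hterm i
      _ = Fintype.card ι * (N - q) := by rw [Finset.sum_const, Finset.card_univ, smul_eq_mul]
      _ ≤ q * (N - q) := Nat.mul_le_mul_right _ hι
  have := Nat.le_of_mul_le_mul_left hchain (by omega)
  omega

theorem aux_card_le_sum (s : Multiset ℕ) (h : ∀ x ∈ s, 1 ≤ x) : Multiset.card s ≤ s.sum := by
  induction s using Multiset.induction_on with
  | empty => simp
  | cons a s ih =>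
    rw [Multiset.card_cons, Multiset.sum_cons]
    have := h a (Multiset.mem_cons_self a s)
    have := ih fun x hx => h x (Multiset.mem_cons_of_mem hx)
    omega

open UniqueFactorizationMonoid in
theorem aux_exists_coprime_pair {F : Type} [Field F] [Fintype F]
    (V : Submodule F (MvPolynomial (Fin 3) F)) (hV : V ≠ ⊥) (hfin : Module.Finite F V)
    (hdeg : ∀ p ∈ V, MvPolynomial.totalDegree p ≤ Fintype.card F)
    (hgcd : ∀ e, (∀ p ∈ V, e ∣ p) → IsUnit e) :
    ∃ f ∈ V, ∃ g ∈ V, ∀ e, e ∣ f → e ∣ g → IsUnit e := by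
  classical
  letI : StrongNormalizationMonoid (MvPolynomial (Fin 3) F) :=
    UniqueFactorizationMonoid.normalizationMonoid
  obtain ⟨f, hfV, hf0⟩ := Submodule.exists_mem_ne_zero_of_ne_bot hV
  set P := (normalizedFactors f).toFinset with hP
  have hPcard : P.card ≤ Fintype.card F := by
    obtain ⟨h1, h2⟩ := aux_totalDegree_multiset_prod
      (s := normalizedFactors f) (fun a ha => (prime_of_normalized_factor a ha).ne_zero)
    have h3 : (normalizedFactors f).prod.totalDegree ≤ f.totalDegree :=
      aux_totalDegree_le_of_dvd (prod_normalizedFactors hf0).dvd hf0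
    have h4 : Multiset.card (normalizedFactors f)
        ≤ ((normalizedFactors f).map MvPolynomial.totalDegree).sum := by
      rw [← Multiset.card_map MvPolynomial.totalDegree]
      refine aux_card_le_sum _ ?_
      intro x hx
      obtain ⟨a, ha, rfl⟩ := Multiset.mem_map.mp hx
      exact aux_prime_totalDegree_pos (prime_of_normalized_factor a ha)
    have h5 : P.card ≤ Multiset.card (normalizedFactors f) := Multiset.toFinset_card_le _
    have h6 := hdeg f hfV
    omega
  haveI : Finite ↥V := Module.finite_iff_finite.mp hfin
  haveI : Nontrivial ↥V := Submodule.nontrivial_iff_ne_bot.mpr hV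
  have hι : Fintype.card {x // x ∈ P} ≤ Fintype.card F := by
    simpa [Fintype.card_coe] using hPcard
  set W : {x // x ∈ P} → Submodule F ↥V := fun π =>
    Submodule.comap V.subtype ((Ideal.span {π.val}).restrictScalars F) with hWdef
  have hmemW : ∀ (π : {x // x ∈ P}) (x : ↥V), x ∈ W π ↔ π.val ∣ x.val := by
    intro π x
    rw [hWdef]
    simp only [Submodule.mem_comap, Submodule.restrictScalars_mem, Submodule.subtype_apply]
    exact Ideal.mem_span_singleton
  have hWtop : ∀ π, W π ≠ ⊤ := by
    intro π htop
    have hprime : Prime π.val := prime_of_normalized_factor _ (Multiset.mem_toFinset.mp π.2)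
    apply hprime.not_unit
    apply hgcd
    intro p hp
    have hx : (⟨p, hp⟩ : ↥V) ∈ W π := htop ▸ Submodule.mem_top
    exact (hmemW π ⟨p, hp⟩).mp hx
  obtain ⟨g, hg0, hg⟩ := aux_covering hι W hWtop
  refine ⟨f, hfV, g.val, g.2, ?_⟩
  intro e hef heg
  by_contra hu
  have he0 : e ≠ 0 := fun h => hf0 (zero_dvd_iff.mp (h ▸ hef))
  obtain ⟨π, hπ, hπe⟩ := WfDvdMonoid.exists_irreducible_factor hu he0
  obtain ⟨π', hπ'mem, hassoc⟩ := exists_mem_normalizedFactors_of_dvd hf0 hπ (hπe.trans hef)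
  have hπ'g : π' ∣ g.val := hassoc.symm.dvd.trans (hπe.trans heg)
  exact hg ⟨π', Multiset.mem_toFinset.mpr hπ'mem⟩
    ((hmemW ⟨π', Multiset.mem_toFinset.mpr hπ'mem⟩ g).mpr hπ'g)

/-- If `U` is a nonzero finite-dimensional subspace of `F_q[X₁,X₂,X₃]` in which every element
has total degree at most `q`, then there are `f, g ∈ U` such that a gcd of `f` and `g`
divides every element of `U`. -/
theorem gcd_of_subspace (F : Type) [Field F] [Fintype F]
    (U : Submodule F (MvPolynomial (Fin 3) F)) (hU : U ≠ ⊥)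
    (hfin : Module.Finite F U)
    (hdeg : ∀ p ∈ U, MvPolynomial.totalDegree p ≤ Fintype.card F) :
    ∃ f ∈ U, ∃ g ∈ U, ∃ d : MvPolynomial (Fin 3) F,
      d ∣ f ∧ d ∣ g ∧ (∀ e : MvPolynomial (Fin 3) F, e ∣ f → e ∣ g → e ∣ d) ∧
      ∀ p ∈ U, d ∣ p := by
  classical
  letI : StrongNormalizationMonoid (MvPolynomial (Fin 3) F) :=
    UniqueFactorizationMonoid.normalizationMonoid
  letI : StrongNormalizedGCDMonoid (MvPolynomial (Fin 3) F) :=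
    UniqueFactorizationMonoid.toStrongNormalizedGCDMonoid _
  obtain ⟨s, hs⟩ : U.FG := Module.Finite.iff_fg.mp hfin
  set h := s.gcd id with hh
  have hdvdU : ∀ p ∈ U, h ∣ p := by
    intro p hp
    have hle : U ≤ (Ideal.span {h}).restrictScalars F := by
      rw [← hs]
      apply Submodule.span_le.mpr
      intro b hb
      exact Ideal.mem_span_singleton.mpr (Finset.gcd_dvd hb)
    exact Ideal.mem_span_singleton.mp (hle hp)
  obtain ⟨u, huU, hu0⟩ := Submodule.exists_mem_ne_zero_of_ne_bot hU
  have hh0 : h ≠ 0 := fun hz => hu0 (zero_dvd_iff.mp (hz ▸ hdvdU u huU))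
  set μ := LinearMap.mulLeft F h with hμ
  set V := U.comap μ with hV
  have hmemV : ∀ x, x ∈ V ↔ h * x ∈ U := by
    intro x
    rw [hV, Submodule.mem_comap, hμ, LinearMap.mulLeft_apply]
  obtain ⟨v, hvV, hv0⟩ : ∃ v, v ∈ V ∧ v ≠ 0 := by
    obtain ⟨v, hv⟩ := hdvdU u huU
    refine ⟨v, (hmemV v).mpr (hv ▸ huU), fun h0 => hu0 ?_⟩
    rw [hv, h0, mul_zero]
  have hVbot : V ≠ ⊥ := fun hb => hv0 (by simpa [hb] using hvV)
  haveI := hfin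
  haveI : Module.Finite F ↥V := by
    refine Module.Finite.of_injective
      (μ.restrict (p := V) (q := U) (fun x hx => hx)) ?_
    intro a b hab
    have hab' : h * (a : MvPolynomial (Fin 3) F) = h * (b : MvPolynomial (Fin 3) F) := by
      have := congrArg Subtype.val hab
      simpa [LinearMap.restrict_apply, hμ] using this
    exact Subtype.ext (mul_left_cancel₀ hh0 hab')
  have hVdeg : ∀ p ∈ V, MvPolynomial.totalDegree p ≤ Fintype.card F := by
    intro p hp
    by_cases hp0 : p = 0
    · simp [hp0]
    · have h1 := hdeg _ ((hmemV p).mp hp)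
      rw [aux_totalDegree_mul_eq hh0 hp0] at h1
      omega
  have hVgcd : ∀ e, (∀ p ∈ V, e ∣ p) → IsUnit e := by
    intro e he
    have hdvd : h * e ∣ h * 1 := by
      rw [mul_one, hh]
      apply Finset.dvd_gcd
      intro b hb
      have hbU : b ∈ U := hs ▸ Submodule.subset_span hb
      obtain ⟨w, hw⟩ := hdvdU b hbU
      have hwV : w ∈ V := (hmemV w).mpr (hw ▸ hbU)
      rw [hw]
      exact mul_dvd_mul_left h (he w hwV)
    exact isUnit_of_dvd_one ((mul_dvd_mul_iff_left hh0).mp hdvd)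
  obtain ⟨f', hf'V, g', hg'V, hcop⟩ := aux_exists_coprime_pair V hVbot ‹_› hVdeg hVgcd
  refine ⟨h * f', (hmemV f').mp hf'V, h * g', (hmemV g').mp hg'V,
    gcd (h * f') (h * g'), gcd_dvd_left _ _, gcd_dvd_right _ _,
    fun e he1 he2 => dvd_gcd he1 he2, ?_⟩
  intro p hp
  have h2 : IsUnit (gcd f' g') := hcop _ (gcd_dvd_left _ _) (gcd_dvd_right _ _)
  have h3 : gcd (h * f') (h * g') ∣ h := by
    rw [_root_.gcd_mul_left]
    exact (h2.mul_right_dvd).mpr (normalize_associated h).dvd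
  exact h3.trans (hdvdU p hp)
end
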